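/- Let R be a tangible supertropical semiring (e·𝒯(R) = 𝒢(R)) with 𝒢(R) a cancellative monoid under multiplication, V a free R-module with base (ε_i)_{i∈I}, and q a quadratic form on V. Suppose x, y ∈ V are q-minimal with y < x and e·q(y) = e·q(x); let J := supp(y). Then q(y) ∈ 𝒯(R), q(x) ∈ 𝒢(R), and one of the following holds: (1) |supp(y)| = |supp(x)| = 1 and x = e·y; (2) |supp(y)| = |supp(x)| = 2 and y < x < e·y; (3) |supp(y)| = 1, |supp(x)| ≥ 2, and y = x(J); (4) |supp(y)| = 2, |supp(x)| ≥ 3, and y = x(J). -/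

import Mathlib

open scoped Classical

namespace Supertrop

section Defs

variable (R : Type*) [CommSemiring R]

/-- The distinguished element `e = 1 + 1` of a semiring. -/
def eps : R := 1 + 1

/-- `R` is a supertropical semiring: `e` is additively idempotent, and the two
supertropical addition axioms hold. -/
def IsSupertropical : Prop :=
  eps R + eps R = eps R ∧
    (∀ x y : R, eps R * x ≠ eps R * y → x + y = x ∨ x + y = y) ∧
    (∀ x y : R, eps R * x = eps R * y → x + y = eps R * y)

/-- The ghost ideal `eR`, as a subset of `R`. -/
def eSet : Set R := Set.range (fun a : R => eps R * a)

/-- The tangible elements `𝒯(R) = R \ eR`. -/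
def tangible : Set R := {x : R | x ∉ eSet R}

/-- The nonzero ghost elements `𝒢(R) = eR \ {0}`. -/
def ghost : Set R := eSet R \ {0}

end Defs

section Orders

variable {R : Type*} [CommSemiring R]

/-- The minimal ordering on an additive monoid: `x ≤ y` iff `∃ z, x + z = y`. -/
def mle {M : Type*} [AddCommMonoid M] (x y : M) : Prop := ∃ z, x + z = y

/-- Strict minimal ordering. -/
def mlt {M : Type*} [AddCommMonoid M] (x y : M) : Prop := mle x y ∧ x ≠ y

/-- The (total) ordering of the bipotent semiring `eR`: `u ≤ v ⟺ u + v = v`. -/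
def gle (u v : R) : Prop := u + v = v

/-- The strict ordering of `eR`. -/
def glt (u v : R) : Prop := gle u v ∧ u ≠ v

end Orders

section SSF

variable (R : Type*) [CommSemiring R]

/-- `R` is a supersemifield: supertropical, every tangible element is invertible in `R`,
and `𝒢(R)` is a group under multiplication with identity `e`. -/
def IsSupersemifield : Prop :=
  IsSupertropical R ∧
    (∀ t ∈ tangible R, IsUnit t) ∧
    eps R ∈ ghost R ∧
    (∀ g ∈ ghost R, ∀ h ∈ ghost R, g * h ∈ ghost R) ∧
    (∀ g ∈ ghost R, ∃ h ∈ ghost R, g * h = eps R)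

/-- The supersemifield `R` is tangible: `e·𝒯(R) = 𝒢(R)`. -/
def TangibleSSF : Prop := (fun t => eps R * t) '' tangible R = ghost R

/-- Nontriviality: `𝒢(R) ≠ {e}`. -/
def NontrivialG : Prop := ghost R ≠ {eps R}

/-- `R` is discrete: `𝒢(R)` has a smallest element `> e`. -/
def DiscreteR : Prop :=
  ∃ c ∈ ghost R, glt (eps R) c ∧ ∀ d ∈ ghost R, glt (eps R) d → gle c d

/-- `R` is dense: `𝒢(R)` has no smallest element `> e`. -/
def DenseR : Prop := ¬ DiscreteR R

/-- `eR` is a semifield: `e ≠ 0`, `𝒢(R)` is closed under multiplication, and every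
element of `𝒢(R)` is invertible in `eR` with respect to the identity `e`. -/
def GhostSemifield : Prop :=
  eps R ∈ ghost R ∧
    (∀ g ∈ ghost R, ∀ h ∈ ghost R, g * h ∈ ghost R) ∧
    (∀ g ∈ ghost R, ∃ h ∈ ghost R, g * h = eps R)

end SSF

section Quad

variable {R : Type*} [CommSemiring R] {V : Type*} [AddCommMonoid V] [Module R V]

/-- `b` is a (symmetric bilinear) companion of the quadratic form `q`. -/
def IsCompanion (q : V → R) (b : V → V → R) : Prop :=
  (∀ x y, b x y = b y x) ∧
    (∀ x y z, b (x + y) z = b x z + b y z) ∧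
    (∀ (a : R) (x y : V), b (a • x) y = a * b x y) ∧
    (∀ x y, q (x + y) = q x + q y + b x y)

/-- `(q, b)` is a quadratic pair on `V`. -/
def IsQuadPair (q : V → R) (b : V → V → R) : Prop :=
  (∀ (a : R) (x : V), q (a • x) = a ^ 2 * q x) ∧ IsCompanion q b

/-- `q` is a quadratic form on `V`. -/
def IsQuadForm (q : V → R) : Prop := ∃ b, IsQuadPair q b

/-- `q` is quasilinear (i.e. additive) on the submodule `W`. -/
def QuasilinearOn (q : V → R) (W : Submodule R V) : Prop :=
  ∀ u ∈ W, ∀ v ∈ W, q (u + v) = q u + q v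

/-- `x` is `q`-minimal: `q x' < q x` for every `x' < x` (in the minimal orderings). -/
def QMinimal (q : V → R) (x : V) : Prop := ∀ x' : V, mlt x' x → mlt (q x') (q x)

/-- The maximum of two elements of `R` with respect to the minimal ordering. -/
noncomputable def rsup (a b : R) : R := if a = b then a else a + b

/-- The componentwise maximum `x ∨ y` (in the minimal ordering) of two vectors
of a free module. -/
noncomputable def vsup {ι : Type*} (bV : Module.Basis ι R V) (x y : V) : V :=
  bV.repr.symm (Finsupp.zipWith rsup (by simp [rsup]) (bV.repr x) (bV.repr y))

/-- The restriction `x(J)` of a vector to a subset `J` of the index set of the base. -/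
noncomputable def restrict {ι : Type*} (bV : Module.Basis ι R V) (x : V) (J : Finset ι) : V :=
  ∑ i ∈ J, (bV.repr x) i • bV i

/-- The CS-ratio `CS(x,y) = e·b(x,y)² · (e·q(x)·q(y))⁻¹`, where `inv` is the
inversion of the semifield `eR`. -/
noncomputable def CSratio (q : V → R) (b : V → V → R) (inv : R → R) (x y : V) : R :=
  eps R * (b x y) ^ 2 * inv (eps R * (q x * q y))

end Quad

section Base

variable {R : Type*} [CommSemiring R]

lemma eps_add (hR : IsSupertropical R) : eps R + eps R = eps R := hR.1

lemma eps_mul_eps (hR : IsSupertropical R) : eps R * eps R = eps R := by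
  have : eps R * eps R = eps R + eps R := by
    show eps R * (1 + 1) = _; rw [mul_add, mul_one]
  rw [this, hR.1]

lemma add_self_eq (hR : IsSupertropical R) (a : R) : a + a = eps R * a :=
  hR.2.2 a a rfl

lemma eps_mul_eps_mul (hR : IsSupertropical R) (a : R) :
    eps R * (eps R * a) = eps R * a := by
  rw [← mul_assoc, eps_mul_eps hR]

lemma eq_zero_of_eps_mul (hR : IsSupertropical R) {a : R} (h : eps R * a = 0) :
    a = 0 := by
  have := hR.2.2 a 0 (by rw [h, mul_zero])
  rwa [add_zero, mul_zero] at this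

lemma mem_eSet_iff {a : R} : a ∈ eSet R ↔ ∃ c, eps R * c = a := Iff.rfl

lemma eps_mul_mem_eSet (a : R) : eps R * a ∈ eSet R := ⟨a, rfl⟩

lemma eps_mul_of_mem_eSet (hR : IsSupertropical R) {a : R} (h : a ∈ eSet R) :
    eps R * a = a := by
  obtain ⟨c, rfl⟩ := h
  exact eps_mul_eps_mul hR c

lemma zerosumfree (hR : IsSupertropical R) {a b : R} (h : a + b = 0) :
    a = 0 ∧ b = 0 := by
  by_cases hc : eps R * a = eps R * b
  · have hb : b = 0 := eq_zero_of_eps_mul hR (by rw [← hR.2.2 a b hc, h])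
    refine ⟨?_, hb⟩
    rw [hb, add_zero] at h; exact h
  · rcases hR.2.1 a b hc with h' | h'
    · have ha : a = 0 := h' ▸ h
      refine ⟨ha, ?_⟩
      rw [ha, zero_add] at h; exact h
    · have hb : b = 0 := h' ▸ h
      refine ⟨?_, hb⟩
      rw [hb, add_zero] at h; exact h

lemma mle_refl {M : Type*} [AddCommMonoid M] (a : M) : mle a a := ⟨0, add_zero a⟩

lemma mle_trans {M : Type*} [AddCommMonoid M] {a b c : M} (h : mle a b)
    (h' : mle b c) : mle a c := by
  obtain ⟨z, rfl⟩ := h; obtain ⟨w, rfl⟩ := h'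
  exact ⟨z + w, (add_assoc _ _ _).symm⟩

lemma mle_add_right {M : Type*} [AddCommMonoid M] (a b : M) : mle a (a + b) := ⟨b, rfl⟩

lemma mle_mul_left {a b : R} (c : R) (h : mle a b) : mle (c * a) (c * b) := by
  obtain ⟨z, rfl⟩ := h; exact ⟨c * z, (mul_add c a z).symm⟩

lemma mle_mul {a b c d : R} (h : mle a b) (h' : mle c d) : mle (a * c) (b * d) := by
  obtain ⟨z, rfl⟩ := h; obtain ⟨w, rfl⟩ := h'
  exact ⟨a * w + z * (c + w), by ring⟩

lemma mlt_iff (hR : IsSupertropical R) {a b : R} :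
    mlt a b ↔ a + b = b ∧ a ≠ b := by
  constructor
  · rintro ⟨⟨z, rfl⟩, hne⟩
    refine ⟨?_, hne⟩
    by_cases hc : eps R * a = eps R * z
    · have h1 : a + z = eps R * a := by rw [hR.2.2 a z hc, hc]
      rw [h1]
      have h2 : eps R * a = eps R * (eps R * a) := (eps_mul_eps_mul hR a).symm
      rw [hR.2.2 a (eps R * a) h2, eps_mul_eps_mul hR]
    · rcases hR.2.1 a z hc with h' | h'
      · exact absurd h'.symm hne
      · rw [h']; exact h'
  · rintro ⟨h, hne⟩; exact ⟨⟨b, h⟩, hne⟩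

lemma mle_antisymm (hR : IsSupertropical R) {a b : R} (h : mle a b)
    (h' : mle b a) : a = b := by
  by_contra hne
  have h1 := ((mlt_iff hR).1 ⟨h, hne⟩).1
  have h2 := ((mlt_iff hR).1 ⟨h', Ne.symm hne⟩).1
  rw [add_comm] at h2
  exact hne (h2.symm.trans h1)

lemma mle_eps_mul (hR : IsSupertropical R) (a : R) : mle a (eps R * a) :=
  ⟨a, add_self_eq hR a⟩

lemma interval_lemma (hR : IsSupertropical R) {a b : R} (h : mlt a b)
    (h' : mle b (eps R * a)) : b = eps R * a := by
  obtain ⟨hab, hne⟩ := (mlt_iff hR).1 h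
  have h1 : mle (eps R * a) (eps R * b) := ⟨eps R * b, by rw [← mul_add, hab]⟩
  have h2 : mle (eps R * b) (eps R * a) := by
    obtain ⟨w, hw⟩ := h'
    exact ⟨eps R * w, by rw [← mul_add, hw, eps_mul_eps_mul hR]⟩
  have heq : eps R * a = eps R * b := mle_antisymm hR h1 h2
  have := hR.2.2 a b heq
  rw [hab] at this
  rw [this, ← heq]

lemma eps_mle_of_mlt (hR : IsSupertropical R) {a b : R} (h : mlt a b) :
    mle (eps R * a) b := by
  obtain ⟨hab, hne⟩ := (mlt_iff hR).1 h
  by_cases hc : eps R * a = eps R * b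
  · have hb : b = eps R * a := by rw [← hab, hR.2.2 a b hc, hc]
    rw [← hb]; exact mle_refl b
  · by_cases hc2 : eps R * (eps R * a) = eps R * b
    · rw [eps_mul_eps_mul hR] at hc2; exact absurd hc2 hc
    · rcases hR.2.1 (eps R * a) b hc2 with h2 | h2
      · -- e*a + b = e*a, so b ≤ e*a, interval lemma: b = e*a
        have : b = eps R * a := interval_lemma hR h ⟨eps R * a, by rw [add_comm]; exact h2⟩
        rw [← this]; exact mle_refl b
      · exact ⟨b, h2⟩

lemma mle_zero (hR : IsSupertropical R) {a : R} (h : mle a 0) : a = 0 := by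
  obtain ⟨z, hz⟩ := h; exact (zerosumfree hR hz).1

end Base

section QuadLemmas

variable {R : Type*} [CommSemiring R] {V : Type*} [AddCommMonoid V] [Module R V]
variable {q : V → R} {bb : V → V → R}

lemma q_zero (hqb : IsQuadPair q bb) : q 0 = 0 := by
  have := hqb.1 0 (0 : V)
  simpa using this

lemma bb_zero_left (hqb : IsQuadPair q bb) (v : V) : bb 0 v = 0 := by
  have := hqb.2.2.2.1 0 (0 : V) v
  simpa using this

lemma bb_zero_right (hqb : IsQuadPair q bb) (v : V) : bb v 0 = 0 := by
  rw [hqb.2.1 v 0]; exact bb_zero_left hqb v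

lemma bb_add_right (hqb : IsQuadPair q bb) (x u v : V) :
    bb x (u + v) = bb x u + bb x v := by
  rw [hqb.2.1 x (u + v), hqb.2.2.1 u v x, hqb.2.1 u x, hqb.2.1 v x]

lemma bb_smul_right (hqb : IsQuadPair q bb) (a : R) (x v : V) :
    bb x (a • v) = a * bb x v := by
  rw [hqb.2.1 x (a • v), hqb.2.2.2.1 a v x, hqb.2.1 v x]

lemma bb_sum_right (hqb : IsQuadPair q bb) (x : V) {α : Type*} (s : Finset α)
    (w : α → V) : bb x (∑ i ∈ s, w i) = ∑ i ∈ s, bb x (w i) := by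
  classical
  induction s using Finset.induction_on with
  | empty => simpa using bb_zero_right hqb x
  | insert _ _ hns ih =>
      rw [Finset.sum_insert hns, Finset.sum_insert hns, bb_add_right hqb, ih]

lemma q_mono (hqb : IsQuadPair q bb) {u v : V} (h : mle u v) : mle (q u) (q v) := by
  obtain ⟨z, rfl⟩ := h
  exact ⟨q z + bb u z, by rw [hqb.2.2.2.2 u z, add_assoc]⟩

lemma bb_mle_q (hqb : IsQuadPair q bb) (u v : V) : mle (bb u v) (q (u + v)) :=
  ⟨q u + q v, by rw [hqb.2.2.2.2 u v]; ring⟩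

end QuadLemmas

section Collapse

variable {R : Type*} [CommSemiring R]

lemma two_collapse (hR : IsSupertropical R) (a b : R) :
    (a + b = a ∨ a + b = eps R * a) ∨ (a + b = b ∨ a + b = eps R * b) := by
  by_cases hc : eps R * a = eps R * b
  · right; right; exact hR.2.2 a b hc
  · rcases hR.2.1 a b hc with h | h
    · left; left; exact h
    · right; left; exact h

lemma sum_collapse (hR : IsSupertropical R) {α : Type*} (s : Finset α)
    (f : α → R) :
    (∑ i ∈ s, f i) = 0 ∨
      ∃ i ∈ s, (∑ i ∈ s, f i) = f i ∨ (∑ i ∈ s, f i) = eps R * f i := by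
  classical
  induction s using Finset.induction_on with
  | empty => left; exact Finset.sum_empty
  | @insert a s hns ih =>
      rw [Finset.sum_insert hns]
      rcases ih with h0 | ⟨i, hi, hfi⟩
      · right; exact ⟨a, Finset.mem_insert_self a s, Or.inl (by rw [h0, add_zero])⟩
      · rcases two_collapse hR (f a) (∑ i ∈ s, f i) with h | h
        · right; exact ⟨a, Finset.mem_insert_self a s, h⟩
        · right; refine ⟨i, Finset.mem_insert_of_mem hi, ?_⟩
          rcases h with h | h <;> rcases hfi with h' | h'
          · left; rw [h, h']
          · right; rw [h, h']
          · right; rw [h, h']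
          · right; rw [h, h', eps_mul_eps_mul hR]

end Collapse

section SumStructure

variable {R : Type*} [CommSemiring R] {V : Type*} [AddCommMonoid V] [Module R V]
variable {q : V → R} {bb : V → V → R}

/-- The value of `q` on a finite sum is, up to a factor `e`, either `q` of one
summand or `b` of a pair of distinct summands. -/
lemma q_sum_structure (hR : IsSupertropical R) (hqb : IsQuadPair q bb)
    {ι : Type*} (s : Finset ι) (w : ι → V) :
    q (∑ i ∈ s, w i) = 0 ∨
    (∃ i ∈ s, q (∑ i ∈ s, w i) = q (w i) ∨
        q (∑ i ∈ s, w i) = eps R * q (w i)) ∨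
    (∃ i ∈ s, ∃ j ∈ s, i ≠ j ∧
        (q (∑ i ∈ s, w i) = bb (w i) (w j) ∨
          q (∑ i ∈ s, w i) = eps R * bb (w i) (w j))) := by
  classical
  induction s using Finset.induction_on with
  | empty => left; rw [Finset.sum_empty]; exact q_zero hqb
  | @insert a s hns ih =>
      rw [Finset.sum_insert hns]
      have hexp : q (w a + ∑ i ∈ s, w i) =
          q (w a) + (q (∑ i ∈ s, w i) + ∑ i ∈ s, bb (w a) (w i)) := by
        rw [hqb.2.2.2.2 (w a) (∑ i ∈ s, w i), bb_sum_right hqb, add_assoc]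
      set A := q (w a)
      set B := q (∑ i ∈ s, w i)
      set C := ∑ i ∈ s, bb (w a) (w i)
      -- helper to transport "X = t ∨ X = e*t" along "T = X ∨ T = e*X"
      have lift : ∀ {T X t : R}, (T = X ∨ T = eps R * X) →
          (X = t ∨ X = eps R * t) → (T = t ∨ T = eps R * t) := by
        rintro T X t (rfl | rfl) (rfl | rfl)
        · left; rfl
        · right; rfl
        · right; rfl
        · right; rw [eps_mul_eps_mul hR]
      rcases two_collapse hR A (B + C) with hT | hT
      · -- value is A (= q (w a)) up to e
        right; left
        exact ⟨a, Finset.mem_insert_self a s, by rw [hexp]; exact hT⟩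
      · have hT' : (q (w a + ∑ i ∈ s, w i) = B + C ∨
            q (w a + ∑ i ∈ s, w i) = eps R * (B + C)) := by rw [hexp]; exact hT
        rcases two_collapse hR B C with hBC | hBC
        · -- B + C collapses to B
          have h2 : q (w a + ∑ i ∈ s, w i) = B ∨
              q (w a + ∑ i ∈ s, w i) = eps R * B := lift hT' hBC
          rcases ih with h0 | hmid | hpair
          · -- B = 0
            rcases h2 with h2 | h2
            · left; rw [h2, h0]
            · left; rw [h2, h0, mul_zero]
          · obtain ⟨i, hi, hfi⟩ := hmid
            right; left
            exact ⟨i, Finset.mem_insert_of_mem hi, lift h2 hfi⟩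
          · obtain ⟨i, hi, j, hj, hij, hfi⟩ := hpair
            right; right
            exact ⟨i, Finset.mem_insert_of_mem hi, j, Finset.mem_insert_of_mem hj,
              hij, lift h2 hfi⟩
        · -- B + C collapses to C
          have h2 : q (w a + ∑ i ∈ s, w i) = C ∨
              q (w a + ∑ i ∈ s, w i) = eps R * C := lift hT' hBC
          rcases sum_collapse hR s (fun i => bb (w a) (w i)) with h0 | ⟨i, hi, hfi⟩
          · rcases h2 with h2 | h2
            · left; rw [h2]; exact h0
            · left; rw [h2]; rw [show C = 0 from h0, mul_zero]
          · right; right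
            refine ⟨a, Finset.mem_insert_self a s, i, Finset.mem_insert_of_mem hi,
              fun h => hns (h ▸ hi), lift h2 hfi⟩

end SumStructure

section BasisLemmas

variable {R : Type*} [CommSemiring R] {V : Type*} [AddCommMonoid V] [Module R V]
variable {ι : Type*} (bV : Module.Basis ι R V)

lemma repr_restrict (x : V) (J : Finset ι) (k : ι) :
    bV.repr (restrict bV x J) k = if k ∈ J then bV.repr x k else 0 := by
  classical
  unfold restrict
  rw [map_sum, Finsupp.finset_sum_apply]
  have : ∀ i ∈ J, (bV.repr ((bV.repr x) i • bV i)) k =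
      if i = k then bV.repr x i else 0 := by
    intro i _
    rw [map_smul, bV.repr_self, Finsupp.smul_apply, Finsupp.single_apply]
    split <;> simp
  rw [Finset.sum_congr rfl this, Finset.sum_ite_eq' J k (fun i => bV.repr x i)]

lemma restrict_support_eq (x : V) : restrict bV x (bV.repr x).support = x := by
  classical
  unfold restrict
  conv_rhs => rw [← bV.linearCombination_repr x]
  rw [Finsupp.linearCombination_apply, Finsupp.sum]

lemma restrict_add_sdiff (x : V) {K J : Finset ι} (h : K ⊆ J) :
    restrict bV x K + restrict bV x (J \ K) = restrict bV x J := by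
  classical
  unfold restrict
  rw [add_comm, Finset.sum_sdiff h]

lemma mle_repr {y x : V} (h : mle y x) (i : ι) :
    mle (bV.repr y i) (bV.repr x i) := by
  obtain ⟨z, rfl⟩ := h
  exact ⟨bV.repr z i, by rw [map_add, Finsupp.add_apply]⟩

lemma mle_of_repr {y x : V} (h : ∀ i, mle (bV.repr y i) (bV.repr x i)) :
    mle y x := by
  classical
  choose z hz using h
  set s := (bV.repr y).support ∪ (bV.repr x).support with hs
  refine ⟨∑ i ∈ s, z i • bV i, ?_⟩
  apply bV.repr.injective
  ext k
  rw [map_add, Finsupp.add_apply]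
  have hrz : bV.repr (∑ i ∈ s, z i • bV i) k = if k ∈ s then z k else 0 := by
    rw [map_sum, Finsupp.finset_sum_apply]
    have : ∀ i ∈ s, (bV.repr (z i • bV i)) k = if i = k then z i else 0 := by
      intro i _
      rw [map_smul, bV.repr_self, Finsupp.smul_apply, Finsupp.single_apply]
      split <;> simp
    rw [Finset.sum_congr rfl this, Finset.sum_ite_eq' s k z]
  rw [hrz]
  by_cases hk : k ∈ s
  · rw [if_pos hk]; exact hz k
  · rw [if_neg hk, add_zero]
    rw [hs, Finset.mem_union, not_or] at hk
    have h1 : bV.repr y k = 0 := Finsupp.notMem_support_iff.1 hk.1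
    have h2 : bV.repr x k = 0 := Finsupp.notMem_support_iff.1 hk.2
    rw [h1, h2]

lemma mle_restrict_of_subset (x : V) {K J : Finset ι}
    (h : K ⊆ J) : mle (restrict bV x K) (restrict bV x J) :=
  ⟨restrict bV x (J \ K), restrict_add_sdiff bV x h⟩

end BasisLemmas

section MinSupp

variable {R : Type*} [CommSemiring R] {V : Type*} [AddCommMonoid V] [Module R V]
variable {ι : Type*} (bV : Module.Basis ι R V)
variable {q : V → R} {bb : V → V → R}

lemma restrict_ne_of_ssubset {v : V} {K : Finset ι}
    (hK : K ⊆ (bV.repr v).support) (hne : K ≠ (bV.repr v).support) :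
    restrict bV v K ≠ v := by
  obtain ⟨k, hk, hkK⟩ := Finset.exists_of_ssubset (lt_of_le_of_ne hK hne)
  intro h
  have := repr_restrict bV v K k
  rw [h, if_neg hkK] at this
  exact Finsupp.mem_support_iff.1 hk this

lemma mle_restrict (x : V) (K : Finset ι) (hK : K ⊆ (bV.repr x).support) :
    mle (restrict bV x K) x := by
  have h := mle_restrict_of_subset bV x hK
  rwa [restrict_support_eq bV x] at h

/-- A `q`-minimal vector with tangible value has support of size 1 or 2, and
its value is the corresponding dominant term. -/
lemma minimal_support_structure (hR : IsSupertropical R)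
    (hqb : IsQuadPair q bb) {v : V} (hmin : QMinimal q v)
    (htang : q v ∉ eSet R) :
    (∃ i, (bV.repr v).support = {i} ∧ q v = bV.repr v i ^ 2 * q (bV i)) ∨
    (∃ i j, i ≠ j ∧ (bV.repr v).support = {i, j} ∧
      q v = bV.repr v i * (bV.repr v j * bb (bV i) (bV j))) := by
  classical
  set J := (bV.repr v).support with hJ
  set w : ι → V := fun i => bV.repr v i • bV i with hw
  have hv : (∑ i ∈ J, w i) = v := restrict_support_eq bV v
  have hminK : ∀ K : Finset ι, K ⊆ J → mle (q v) (q (restrict bV v K)) → K = J := by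
    intro K hK hle
    by_contra hne
    have hmlt : mlt (restrict bV v K) v :=
      ⟨mle_restrict bV v K hK, restrict_ne_of_ssubset bV hK hne⟩
    have h2 := hmin _ hmlt
    exact h2.2 (mle_antisymm hR h2.1 hle)
  rcases q_sum_structure hR hqb J w with h0 | hmid | hpair
  · rw [hv] at h0
    exact absurd (⟨0, by show eps R * 0 = q v; rw [mul_zero, h0]⟩ : q v ∈ eSet R) htang
  · obtain ⟨i, hi, hfi⟩ := hmid
    rw [hv] at hfi
    have hqv : q v = q (w i) := by
      rcases hfi with h | h
      · exact h
      · exact absurd ⟨q (w i), h.symm⟩ htang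
    have hKJ : ({i} : Finset ι) = J := by
      apply hminK _ (Finset.singleton_subset_iff.2 hi)
      have : restrict bV v {i} = w i := Finset.sum_singleton _ _
      rw [this, ← hqv]; exact mle_refl _
    left
    exact ⟨i, hKJ.symm, by rw [hqv, hw]; exact hqb.1 _ _⟩
  · obtain ⟨i, hi, j, hj, hij, hfi⟩ := hpair
    rw [hv] at hfi
    have hqv : q v = bb (w i) (w j) := by
      rcases hfi with h | h
      · exact h
      · exact absurd ⟨bb (w i) (w j), h.symm⟩ htang
    have hKJ : ({i, j} : Finset ι) = J := by
      apply hminK _ (Finset.insert_subset hi (Finset.singleton_subset_iff.2 hj))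
      have hr : restrict bV v {i, j} = w i + w j := Finset.sum_pair hij
      rw [hr, hqv]; exact bb_mle_q hqb _ _
    right
    refine ⟨i, j, hij, hKJ.symm, ?_⟩
    rw [hqv, hw]
    rw [hqb.2.2.2.1, bb_smul_right hqb]

end MinSupp

section MoreBasis

variable {R : Type*} [CommSemiring R] {V : Type*} [AddCommMonoid V] [Module R V]
variable {ι : Type*} (bV : Module.Basis ι R V)

lemma repr_two (a c : R) (i j k : ι) :
    bV.repr (a • bV i + c • bV j) k =
      (if i = k then a else 0) + (if j = k then c else 0) := by
  classical
  rw [map_add, Finsupp.add_apply, map_smul, map_smul, bV.repr_self, bV.repr_self,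
    Finsupp.smul_apply, Finsupp.smul_apply, Finsupp.single_apply, Finsupp.single_apply]
  congr 1 <;> (split <;> simp)

lemma repr_eps_smul (hR : IsSupertropical R) (y : V) (k : ι) :
    bV.repr (eps R • y) k = eps R * bV.repr y k := by
  rw [map_smul, Finsupp.smul_apply, smul_eq_mul]

end MoreBasis

section Cores

variable {R : Type*} [CommSemiring R]

/-- Case II core computation, at the level of `R`. -/
lemma caseII_R (hR : IsSupertropical R) {a c d f B t : R} (hac : mlt a c)
    (hdf : mle d f) (ht : t = a * (d * B)) (hle : mle (c * (f * B)) t)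
    (htang : t ∉ eSet R) : False := by
  have hei : mle (eps R * a) c := eps_mle_of_mlt hR hac
  have h1 : mle (eps R * t) (c * (f * B)) := by
    rw [ht, show eps R * (a * (d * B)) = (eps R * a) * (d * B) by ring]
    exact mle_mul hei (mle_mul hdf (mle_refl B))
  have h2 : mle (eps R * t) t := mle_trans h1 hle
  exact htang ⟨t, (mle_antisymm hR (mle_eps_mul hR t) h2).symm⟩

/-- Case I core computation (cancellation), at the level of `R`. -/
lemma caseI_R (hR : IsSupertropical R)
    (hcanc : ∀ g ∈ ghost R, ∀ a ∈ ghost R, ∀ c ∈ ghost R, g * a = g * c → a = c)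
    {a c d f B : R} (hac : mle a c) (hdf : mle d f)
    (ha0 : a ≠ 0) (hd0 : d ≠ 0)
    (heq : c * (f * B) = eps R * (a * (d * B)))
    (hne0 : eps R * (a * (d * B)) ≠ 0) :
    eps R * c = eps R * a ∧ eps R * f = eps R * d := by
  have ghmem : ∀ r : R, eps R * r ≠ 0 → eps R * r ∈ ghost R :=
    fun r h => ⟨⟨r, rfl⟩, h⟩
  have hB0 : eps R * B ≠ 0 := by
    intro h
    exact hne0 (by rw [show eps R * (a * (d * B)) = a * (d * (eps R * B)) by ring,
      h, mul_zero, mul_zero])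
  have had0 : eps R * (a * d) ≠ 0 := by
    intro h
    exact hne0 (by rw [show eps R * (a * (d * B)) = (eps R * (a * d)) * B by ring,
      h, zero_mul])
  have hcf0 : eps R * (c * f) ≠ 0 := by
    intro h
    apply hne0
    have h3 : eps R * (a * (d * B)) = (eps R * (c * f)) * B := by
      rw [← eps_mul_eps_mul hR (a * (d * B)), ← heq]; ring
    rw [h3, h, zero_mul]
  have key1 : eps R * (c * f) = eps R * (a * d) := by
    apply hcanc (eps R * B) (ghmem _ hB0) _ (ghmem _ hcf0) _ (ghmem _ had0)
    have l : (eps R * B) * (eps R * (c * f)) = eps R * (eps R * (c * (f * B))) := by ring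
    have r : (eps R * B) * (eps R * (a * d)) = eps R * (eps R * (a * (d * B))) := by ring
    rw [l, r, eps_mul_eps_mul hR, eps_mul_eps_mul hR, heq, eps_mul_eps_mul hR]
  have hAC : mle (eps R * a) (eps R * c) := mle_mul_left _ hac
  have hBD : mle (eps R * d) (eps R * f) := mle_mul_left _ hdf
  have hprod : (eps R * a) * (eps R * d) = (eps R * c) * (eps R * f) := by
    have l : (eps R * a) * (eps R * d) = eps R * (eps R * (a * d)) := by ring
    have r : (eps R * c) * (eps R * f) = eps R * (eps R * (c * f)) := by ring
    rw [l, r, key1]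
  have hstep : (eps R * a) * (eps R * d) = (eps R * c) * (eps R * d) :=
    mle_antisymm hR (mle_mul hAC (mle_refl _))
      (by rw [hprod]; exact mle_mul (mle_refl _) hBD)
  have hed0 : eps R * d ≠ 0 := fun h => hd0 (eq_zero_of_eps_mul hR h)
  have hea0 : eps R * a ≠ 0 := fun h => ha0 (eq_zero_of_eps_mul hR h)
  have hec0 : eps R * c ≠ 0 := by
    intro h
    apply had0
    rw [← eps_mul_eps_mul hR (a * d),
      show eps R * (eps R * (a * d)) = (eps R * a) * (eps R * d) by ring, hstep, h,
      zero_mul]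
  have hef0 : eps R * f ≠ 0 := by
    intro h
    exact hcf0 (by rw [show eps R * (c * f) = c * (eps R * f) by ring, h, mul_zero])
  have heA : eps R * c = eps R * a := by
    apply hcanc (eps R * d) (ghmem _ hed0) _ (ghmem _ hec0) _ (ghmem _ hea0)
    rw [show (eps R * d) * (eps R * c) = (eps R * c) * (eps R * d) by ring, ← hstep]
    ring
  refine ⟨heA, ?_⟩
  apply hcanc (eps R * a) (ghmem _ hea0) _ (ghmem _ hef0) _ (ghmem _ hed0)
  rw [show (eps R * a) * (eps R * f) = (eps R * c) * (eps R * f) by rw [heA], ← hprod]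

end Cores

section CaseIPair

variable {R : Type*} [CommSemiring R] {V : Type*} [AddCommMonoid V] [Module R V]
variable {ι : Type*} (bV : Module.Basis ι R V) {q : V → R} {bb : V → V → R}

/-- Case I with binary support: the pair squeeze. -/
lemma caseI_pair (hR : IsSupertropical R)
    (hcanc : ∀ g ∈ ghost R, ∀ a ∈ ghost R, ∀ c ∈ ghost R, g * a = g * c → a = c)
    (hqb : IsQuadPair q bb) {x y : V} {i j : ι} (hij : i ≠ j)
    (hxr : bV.repr x i • bV i + bV.repr x j • bV j = x)
    (hcompi : mle (bV.repr y i) (bV.repr x i))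
    (hcompj : mle (bV.repr y j) (bV.repr x j))
    (hnei : bV.repr y i ≠ bV.repr x i)
    (hyi0 : bV.repr y i ≠ 0) (hyj0 : bV.repr y j ≠ 0)
    (hqy2 : q y = bV.repr y i * (bV.repr y j * bb (bV i) (bV j)))
    (hqxy : q x = eps R * q y) (hqx0 : q x ≠ 0)
    (hxmin : QMinimal q x) :
    bV.repr x i = eps R * bV.repr y i ∧ bV.repr x j = bV.repr y j := by
  have hterm : mle (bV.repr x i * (bV.repr x j * bb (bV i) (bV j))) (q x) := by
    have h := bb_mle_q hqb (bV.repr x i • bV i) (bV.repr x j • bV j)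
    rw [hxr] at h
    rwa [hqb.2.2.2.1, bb_smul_right hqb] at h
  have hterm2 : mle (eps R * q y)
      (bV.repr x i * (bV.repr x j * bb (bV i) (bV j))) := by
    rw [hqy2, show eps R * (bV.repr y i * (bV.repr y j * bb (bV i) (bV j))) =
      (eps R * bV.repr y i) * (bV.repr y j * bb (bV i) (bV j)) by ring]
    exact mle_mul (eps_mle_of_mlt hR ⟨hcompi, hnei⟩)
      (mle_mul hcompj (mle_refl _))
  have heq : bV.repr x i * (bV.repr x j * bb (bV i) (bV j)) =
      eps R * (bV.repr y i * (bV.repr y j * bb (bV i) (bV j))) := by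
    have e1 : mle (bV.repr x i * (bV.repr x j * bb (bV i) (bV j))) (eps R * q y) :=
      hqxy ▸ hterm
    have e2 := mle_antisymm hR e1 hterm2
    rw [e2, hqy2]
  have hne0 : eps R * (bV.repr y i * (bV.repr y j * bb (bV i) (bV j))) ≠ 0 := by
    rw [← hqy2, ← hqxy]; exact hqx0
  obtain ⟨hci, hfj⟩ := caseI_R hR hcanc hcompi hcompj hyi0 hyj0 heq hne0
  have hxi : bV.repr x i = eps R * bV.repr y i := by
    have h3 := hR.2.2 (bV.repr y i) (bV.repr x i) hci.symm
    have h4 := ((mlt_iff hR).1 ⟨hcompi, hnei⟩).1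
    rw [← h4, h3, hci]
  refine ⟨hxi, ?_⟩
  by_cases hdj : bV.repr y j = bV.repr x j
  · exact hdj.symm
  · exfalso
    have hxj : bV.repr x j = eps R * bV.repr y j := by
      have h3 := hR.2.2 (bV.repr y j) (bV.repr x j) hfj.symm
      have h4 := ((mlt_iff hR).1 ⟨hcompj, hdj⟩).1
      rw [← h4, h3, hfj]
    have hqx' : q x =
        bb (bV.repr y i • bV i) ((eps R * bV.repr y j) • bV j) := by
      rw [hqb.2.2.2.1, bb_smul_right hqb, hqxy, hqy2]; ring
    have hmle : mle (bV.repr y i • bV i + (eps R * bV.repr y j) • bV j) x := by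
      apply mle_of_repr bV
      intro k
      rw [repr_two]
      by_cases hk : i = k
      · subst hk
        rw [if_pos rfl, if_neg (Ne.symm hij), add_zero]
        exact hcompi
      · by_cases hk2 : j = k
        · subst hk2
          rw [if_neg hk, if_pos rfl, zero_add, ← hxj]
          exact mle_refl _
        · rw [if_neg hk, if_neg hk2, add_zero]
          exact ⟨bV.repr x k, zero_add _⟩
    have hne : bV.repr y i • bV i + (eps R * bV.repr y j) • bV j ≠ x := by
      intro h
      apply hnei
      have h5 := repr_two bV (bV.repr y i) (eps R * bV.repr y j) i j i
      rw [h, if_pos rfl, if_neg (Ne.symm hij), add_zero] at h5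
      exact h5.symm
    have h5 := hxmin _ ⟨hmle, hne⟩
    have h6 : mle (q x) (q (bV.repr y i • bV i + (eps R * bV.repr y j) • bV j)) := by
      rw [hqx']
      exact bb_mle_q hqb _ _
    exact h5.2 (mle_antisymm hR h5.1 h6)

end CaseIPair

/-- structure of pairs of `q`-minimal vectors `y < x` with
`e·q(y) = e·q(x)`. -/
theorem stmt19 {R : Type*} [CommSemiring R] (hR : IsSupertropical R)
    (htan : TangibleSSF R) (hid : eps R ∈ ghost R)
    (hmul : ∀ g ∈ ghost R, ∀ h ∈ ghost R, g * h ∈ ghost R)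
    (hcanc : ∀ g ∈ ghost R, ∀ a ∈ ghost R, ∀ c ∈ ghost R, g * a = g * c → a = c)
    {V : Type*} [AddCommMonoid V] [Module R V] {ι : Type*} (bV : Module.Basis ι R V)
    (q : V → R) (hq : IsQuadForm q)
    (x y : V) (hxmin : QMinimal q x) (hymin : QMinimal q y)
    (hlt : mlt y x) (hqq : eps R * q y = eps R * q x) :
    q y ∈ tangible R ∧ q x ∈ ghost R ∧
    (((bV.repr y).support.card = 1 ∧ (bV.repr x).support.card = 1 ∧
        x = eps R • y) ∨
     ((bV.repr y).support.card = 2 ∧ (bV.repr x).support.card = 2 ∧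
        mlt y x ∧ mlt x (eps R • y)) ∨
     ((bV.repr y).support.card = 1 ∧ 2 ≤ (bV.repr x).support.card ∧
        y = restrict bV x (bV.repr y).support) ∨
     ((bV.repr y).support.card = 2 ∧ 3 ≤ (bV.repr x).support.card ∧
        y = restrict bV x (bV.repr y).support)) := by
  classical
  obtain ⟨bb, hqb⟩ := hq
  -- Step 1 : q x is ghost, q y is tangible
  obtain ⟨hqyx, hqne⟩ := (mlt_iff hR).1 (hxmin y hlt)
  have hqxg : q x = eps R * q x := hqyx.symm.trans (hR.2.2 (q y) (q x) hqq)
  have hqx_eSet : q x ∈ eSet R := ⟨q x, hqxg.symm⟩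
  have hqx0 : q x ≠ 0 := by
    intro h
    apply hqne
    have h2 := hqyx
    rw [h, add_zero] at h2
    rw [h2, h]
  have hqx_ghost : q x ∈ ghost R := ⟨hqx_eSet, hqx0⟩
  have hqy_tang : q y ∉ eSet R := fun hmem =>
    hqne ((eps_mul_of_mem_eSet hR hmem).symm.trans (hqq.trans hqxg.symm))
  have hqxy : q x = eps R * q y := hqxg.trans hqq.symm
  have hcomp : ∀ i, mle (bV.repr y i) (bV.repr x i) := fun i => mle_repr bV hlt.1 i
  have hJS : (bV.repr y).support ⊆ (bV.repr x).support := by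
    intro i hi
    rw [Finsupp.mem_support_iff]
    intro h0
    exact Finsupp.mem_support_iff.1 hi (mle_zero hR (h0 ▸ hcomp i))
  have hyr_le : mle y (restrict bV x (bV.repr y).support) := by
    apply mle_of_repr bV
    intro k
    rw [repr_restrict]
    by_cases hk : k ∈ (bV.repr y).support
    · rw [if_pos hk]; exact hcomp k
    · rw [if_neg hk, Finsupp.notMem_support_iff.1 hk]
      exact mle_refl 0
  have hr_le_x : mle (restrict bV x (bV.repr y).support) x := mle_restrict bV x _ hJS
  have h1 : mle (q y) (q (restrict bV x (bV.repr y).support)) := q_mono hqb hyr_le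
  have h2 : mle (q (restrict bV x (bV.repr y).support)) (q x) := q_mono hqb hr_le_x
  refine ⟨hqy_tang, hqx_ghost, ?_⟩
  by_cases hcase : q (restrict bV x (bV.repr y).support) = q y
  · -- CASE II : y = x(J) and the support inclusion is proper
    have hyrestrict : y = restrict bV x (bV.repr y).support := by
      by_contra hne
      have hstrict : ∃ k ∈ (bV.repr y).support, bV.repr y k ≠ bV.repr x k := by
        have hex : ∃ k, bV.repr y k ≠ bV.repr (restrict bV x (bV.repr y).support) k := by
          by_contra hc
          push_neg at hc
          exact hne (bV.repr.injective (Finsupp.ext hc))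
        obtain ⟨k, hk⟩ := hex
        rw [repr_restrict] at hk
        by_cases hkJ : k ∈ (bV.repr y).support
        · rw [if_pos hkJ] at hk; exact ⟨k, hkJ, hk⟩
        · rw [if_neg hkJ] at hk
          exact absurd (Finsupp.notMem_support_iff.1 hkJ) hk
      obtain ⟨k, hkJ, hk⟩ := hstrict
      rcases minimal_support_structure bV hR hqb hymin hqy_tang with
        ⟨i, hJi, hqy1⟩ | ⟨i, j, hij, hJij, hqy2⟩
      · -- |J| = 1
        have hki : k = i := Finset.mem_singleton.1 (hJi ▸ hkJ)
        subst hki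
        refine caseII_R hR (t := q y) (B := q (bV k)) ⟨hcomp k, hk⟩ (hcomp k)
          (by rw [hqy1]; ring) ?_ hqy_tang
        rw [← hcase]
        have hres : restrict bV x (bV.repr y).support = bV.repr x k • bV k := by
          show (∑ m ∈ (bV.repr y).support, bV.repr x m • bV m) = _
          rw [hJi, Finset.sum_singleton]
        rw [hres, hqb.1]
        exact ⟨0, by rw [add_zero]; ring⟩
      · -- |J| = 2
        have hres : restrict bV x (bV.repr y).support =
            bV.repr x i • bV i + bV.repr x j • bV j := by
          show (∑ m ∈ (bV.repr y).support, bV.repr x m • bV m) = _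
          rw [hJij]
          exact Finset.sum_pair hij
        rcases Finset.mem_insert.1 (hJij ▸ hkJ) with hki | hkj
        · subst hki
          refine caseII_R hR (t := q y) (B := bb (bV k) (bV j)) ⟨hcomp k, hk⟩ (hcomp j) hqy2 ?_ hqy_tang
          rw [← hcase]
          have h3 := bb_mle_q hqb (bV.repr x k • bV k) (bV.repr x j • bV j)
          rw [← hres] at h3
          rwa [hqb.2.2.2.1, bb_smul_right hqb] at h3
        · have hkj' : k = j := Finset.mem_singleton.1 hkj
          subst hkj'
          refine caseII_R hR (t := q y) (B := bb (bV k) (bV i)) ⟨hcomp k, hk⟩ (hcomp i)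
            (by rw [hqy2, hqb.2.1 (bV i) (bV k)]; ring) ?_ hqy_tang
          rw [← hcase]
          have h3 := bb_mle_q hqb (bV.repr x k • bV k) (bV.repr x i • bV i)
          rw [add_comm, ← hres] at h3
          rwa [hqb.2.2.2.1, bb_smul_right hqb] at h3
    have hJneS : (bV.repr y).support ≠ (bV.repr x).support := by
      intro h
      apply hlt.2
      rw [hyrestrict, h, restrict_support_eq]
    have hcard : (bV.repr y).support.card < (bV.repr x).support.card :=
      Finset.card_lt_card (Finset.ssubset_iff_subset_ne.2 ⟨hJS, hJneS⟩)
    rcases minimal_support_structure bV hR hqb hymin hqy_tang with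
      ⟨i, hJi, -⟩ | ⟨i, j, hij, hJij, -⟩
    · have hc1 : (bV.repr y).support.card = 1 := by rw [hJi]; exact Finset.card_singleton i
      exact Or.inr (Or.inr (Or.inl ⟨hc1, by omega, hyrestrict⟩))
    · have hc2 : (bV.repr y).support.card = 2 := by rw [hJij]; exact Finset.card_pair hij
      exact Or.inr (Or.inr (Or.inr ⟨hc2, by omega, hyrestrict⟩))
  · -- CASE I : x = x(J), equal supports
    have hmeq : q (restrict bV x (bV.repr y).support) = eps R * q y :=
      interval_lemma hR ⟨h1, fun h => hcase h.symm⟩ (by rw [← hqxy]; exact h2)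
    have hrx : restrict bV x (bV.repr y).support = x := by
      by_contra hne
      have h3 := hxmin _ ⟨hr_le_x, hne⟩
      exact h3.2 (hmeq.trans hqxy.symm)
    have hSJ : (bV.repr x).support = (bV.repr y).support := by
      apply Finset.Subset.antisymm _ hJS
      intro k hk
      by_contra hkJ
      have h3 := repr_restrict bV x (bV.repr y).support k
      rw [hrx, if_neg hkJ] at h3
      exact Finsupp.mem_support_iff.1 hk h3
    have hstrict : ∃ k ∈ (bV.repr y).support, bV.repr y k ≠ bV.repr x k := by
      have hex : ∃ k, bV.repr y k ≠ bV.repr x k := by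
        by_contra hc
        push_neg at hc
        exact hlt.2 (bV.repr.injective (Finsupp.ext hc))
      obtain ⟨k, hk⟩ := hex
      refine ⟨k, ?_, hk⟩
      by_contra hkJ
      apply hk
      rw [Finsupp.notMem_support_iff.1 hkJ,
        Finsupp.notMem_support_iff.1 (fun hmem => hkJ (hSJ ▸ hmem))]
    obtain ⟨k, hkJ, hk⟩ := hstrict
    rcases minimal_support_structure bV hR hqb hymin hqy_tang with
      ⟨i, hJi, hqy1⟩ | ⟨i, j, hij, hJij, hqy2⟩
    · -- |J| = 1 : x = e • y
      have hki : k = i := Finset.mem_singleton.1 (hJi ▸ hkJ)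
      subst hki
      have hei : mle (eps R * bV.repr y k) (bV.repr x k) :=
        eps_mle_of_mlt hR ⟨hcomp k, hk⟩
      have hxey : x = eps R • y := by
        by_contra hne
        have hmle : mle (eps R • y) x := by
          apply mle_of_repr bV
          intro m
          rw [repr_eps_smul bV hR]
          by_cases hm : m = k
          · subst hm; exact hei
          · rw [Finsupp.notMem_support_iff.1
              (by rw [hJi]; simpa using hm : m ∉ (bV.repr y).support), mul_zero]
            exact ⟨bV.repr x m, zero_add _⟩
        have h3 := hxmin _ ⟨hmle, fun h => hne h.symm⟩
        apply h3.2
        have h4 : q (eps R • y) = eps R ^ 2 * q y := hqb.1 _ _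
        rw [h4, pow_two, eps_mul_eps hR, ← hqxy]
      refine Or.inl ⟨by rw [hJi]; exact Finset.card_singleton k, ?_, hxey⟩
      rw [hSJ, hJi]; exact Finset.card_singleton k
    · -- |J| = 2 : y < x < e • y
      have hS2 : (bV.repr x).support = {i, j} := hSJ.trans hJij
      have hxr : bV.repr x i • bV i + bV.repr x j • bV j = x := by
        have h3 := restrict_support_eq bV x
        rw [hS2] at h3
        have h4 : restrict bV x {i, j} = bV.repr x i • bV i + bV.repr x j • bV j := by
          show (∑ m ∈ ({i, j} : Finset ι), bV.repr x m • bV m) = _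
          exact Finset.sum_pair hij
        rw [← h4]
        exact h3
      have hyi0 : bV.repr y i ≠ 0 :=
        Finsupp.mem_support_iff.1 (by rw [hJij]; exact Finset.mem_insert_self i _)
      have hyj0 : bV.repr y j ≠ 0 :=
        Finsupp.mem_support_iff.1
          (by rw [hJij]; exact Finset.mem_insert_of_mem (Finset.mem_singleton_self j))
      -- tangibility of the coordinates of y
      have hyit : bV.repr y i ∉ eSet R := by
        rintro ⟨c, hc⟩
        exact hqy_tang ⟨c * (bV.repr y j * bb (bV i) (bV j)),
          by rw [hqy2, ← hc]; ring⟩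
      have hyjt : bV.repr y j ∉ eSet R := by
        rintro ⟨c, hc⟩
        exact hqy_tang ⟨bV.repr y i * (c * bb (bV i) (bV j)),
          by rw [hqy2, ← hc]; ring⟩
      have hmain : (bV.repr x i = eps R * bV.repr y i ∧ bV.repr x j = bV.repr y j) ∨
          (bV.repr x j = eps R * bV.repr y j ∧ bV.repr x i = bV.repr y i) := by
        rcases Finset.mem_insert.1 (hJij ▸ hkJ) with hki | hkj
        · subst hki
          exact Or.inl (caseI_pair bV hR hcanc hqb hij hxr (hcomp k) (hcomp j)
            hk hyi0 hyj0 hqy2 hqxy hqx0 hxmin)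
        · have hkj' : k = j := Finset.mem_singleton.1 hkj
          subst hkj'
          refine Or.inr (caseI_pair bV hR hcanc hqb (Ne.symm hij)
            (by rw [add_comm]; exact hxr) (hcomp k) (hcomp i) hk hyj0 hyi0
            (by rw [hqy2, hqb.2.1 (bV i) (bV k)]; ring) hqxy hqx0 hxmin)
      have hmlexe : mle x (eps R • y) := by
        apply mle_of_repr bV
        intro m
        rw [repr_eps_smul bV hR]
        by_cases hmi : m = i
        · subst hmi
          rcases hmain with ⟨h3, -⟩ | ⟨-, h3⟩
          · rw [h3]; exact mle_refl _
          · rw [h3]; exact mle_eps_mul hR _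
        · by_cases hmj : m = j
          · subst hmj
            rcases hmain with ⟨-, h3⟩ | ⟨h3, -⟩
            · rw [h3]; exact mle_eps_mul hR _
            · rw [h3]; exact mle_refl _
          · rw [Finsupp.notMem_support_iff.1
              (by rw [hS2]; simp [hmi, hmj] : m ∉ (bV.repr x).support)]
            exact ⟨eps R * bV.repr y m, zero_add _⟩
      have hnexe : x ≠ eps R • y := by
        intro h
        have hrepr : ∀ m, bV.repr x m = eps R * bV.repr y m := fun m => by
          rw [h, repr_eps_smul bV hR]
        rcases hmain with ⟨-, h3⟩ | ⟨-, h3⟩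
        · exact hyjt ⟨bV.repr y j, (h3.symm.trans (hrepr j)).symm⟩
        · exact hyit ⟨bV.repr y i, (h3.symm.trans (hrepr i)).symm⟩
      refine Or.inr (Or.inl ⟨by rw [hJij]; exact Finset.card_pair hij, ?_, hlt,
        hmlexe, hnexe⟩)
      rw [hS2]; exact Finset.card_pair hij

end Supertrop
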